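/- For every real λ with 0 < λ ≤ 1 and every real x ≥ 1, 1 - 1/x ≤ x^λ - x^(λ-1) ≤ (x^λ - 1)/λ ≤ (1/2)(x^λ - x^(λ-1) + x - 1) ≤ x - 1. -/

import Mathlib

open Real Set intervalIntegral

lemma aux_strictConvexOn_rpow_neg {p : ℝ} (hp : p < 0) :
    StrictConvexOn ℝ (Ioi 0) fun t : ℝ => t ^ p := by
  apply strictConvexOn_of_deriv2_pos' (convex_Ioi 0)
  · intro t ht
    exact (Real.continuousAt_rpow_const t p (Or.inl (ne_of_gt ht))).continuousWithinAt
  · intro t ht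
    rw [mem_Ioi] at ht
    have h1 : deriv (fun t : ℝ => t ^ p) =ᶠ[nhds t] fun y => p * y ^ (p - 1) := by
      filter_upwards [isOpen_Ioi.mem_nhds (show t ∈ Ioi (0:ℝ) from ht)] with y hy
      exact (Real.hasDerivAt_rpow_const (Or.inl (ne_of_gt hy))).deriv
    have h2 : deriv^[2] (fun t : ℝ => t ^ p) t
        = p * ((p - 1) * t ^ (p - 1 - 1)) := by
      simp only [Function.iterate_succ, Function.iterate_zero, Function.comp_apply, id_eq]
      rw [h1.deriv_eq]
      exact ((Real.hasDerivAt_rpow_const (p := p - 1)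
        (Or.inl (ne_of_gt ht))).const_mul p).deriv
    rw [h2]
    have : 0 < p * (p - 1) := mul_pos_of_neg_of_neg hp (by linarith)
    have := Real.rpow_pos_of_pos ht (p - 1 - 1)
    nlinarith

theorem stmt_11 (l x : ℝ) (hl : 0 < l) (hl1 : l ≤ 1) (hx : 1 ≤ x) :
    1 - 1 / x ≤ x ^ l - x ^ (l - 1) ∧
      x ^ l - x ^ (l - 1) ≤ (x ^ l - 1) / l ∧
      (x ^ l - 1) / l ≤ (1 / 2) * (x ^ l - x ^ (l - 1) + x - 1) ∧
      (1 / 2) * (x ^ l - x ^ (l - 1) + x - 1) ≤ x - 1 := by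
  have hx0 : (0:ℝ) < x := by linarith
  have hg1 : x ^ (l - 1) ≤ 1 := Real.rpow_le_one_of_one_le_of_nonpos hx (by linarith)
  have hginv : 1 / x ≤ x ^ (l - 1) := by
    have := Real.rpow_le_rpow_of_exponent_le hx (show (-1:ℝ) ≤ l - 1 by linarith)
    rwa [Real.rpow_neg_one, inv_eq_one_div] at this
  have hgpos : 0 < x ^ (l - 1) := Real.rpow_pos_of_pos hx0 _
  have hXpos : 0 < x ^ l := Real.rpow_pos_of_pos hx0 _
  have hsplit : x ^ l = x ^ (l - 1) * x := by
    rw [← Real.rpow_add_one (ne_of_gt hx0)]; ring_nf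
  refine ⟨?_, ?_, ?_, ?_⟩
  · -- 1 - 1/x ≤ x^l - x^(l-1)
    have h1 : (1 / x) * (x - 1) ≤ x ^ (l - 1) * (x - 1) :=
      mul_le_mul_of_nonneg_right hginv (by linarith)
    have hxne : x ≠ 0 := ne_of_gt hx0
    field_simp at h1 ⊢
    nlinarith [h1]
  · -- x^l - x^(l-1) ≤ (x^l - 1)/l  via Bernoulli
    rw [le_div_iff₀ hl]
    have hb := rpow_one_add_le_one_add_mul_self (s := 1 / x - 1)
      (by nlinarith [one_div_pos.mpr hx0]) hl.le hl1
    have he : (1 + (1 / x - 1)) = x⁻¹ := by ring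
    rw [he, Real.inv_rpow hx0.le] at hb
    have hmul := mul_le_mul_of_nonneg_left hb hXpos.le
    rw [mul_inv_cancel₀ (ne_of_gt hXpos)] at hmul
    have hXx : x ^ l * (1 / x) = x ^ (l - 1) := by
      rw [hsplit]; field_simp
    nlinarith [hmul]
  · -- (x^l - 1)/l ≤ (1/2)(x^l - x^(l-1) + x - 1)
    rcases eq_or_lt_of_le hx with hx1 | hx1
    · subst hx1; simp
    rcases eq_or_lt_of_le hl1 with rfl | hl1'
    · simp only [Real.rpow_one, sub_self, Real.rpow_zero]
      rw [div_one]; linarith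
    have hconv := (aux_strictConvexOn_rpow_neg (show l - 1 < 0 by linarith)).convexOn
    have hxm1 : 0 < x - 1 := by linarith
    -- pointwise bound by the chord
    have hpt : ∀ t ∈ Icc (1:ℝ) x,
        t ^ (l - 1) ≤ (x - x ^ (l - 1)) / (x - 1) + (x ^ (l - 1) - 1) / (x - 1) * t := by
      intro t ht
      obtain ⟨ht1, htx⟩ := ht
      have ha : 0 ≤ (x - t) / (x - 1) := div_nonneg (by linarith) (by linarith)
      have hb : 0 ≤ (t - 1) / (x - 1) := div_nonneg (by linarith) (by linarith)
      have hab : (x - t) / (x - 1) + (t - 1) / (x - 1) = 1 := by field_simp; ring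
      have := hconv.2 (show (1:ℝ) ∈ Ioi 0 by norm_num)
        (show x ∈ Ioi (0:ℝ) from hx0) ha hb hab
      simp only [smul_eq_mul, Real.one_rpow] at this
      have harg : (x - t) / (x - 1) * 1 + (t - 1) / (x - 1) * x = t := by
        field_simp; ring
      rw [harg] at this
      calc t ^ (l - 1) ≤ (x - t) / (x - 1) * 1 + (t - 1) / (x - 1) * x ^ (l - 1) := this
        _ = (x - x ^ (l - 1)) / (x - 1) + (x ^ (l - 1) - 1) / (x - 1) * t := by
            field_simp; ring
    have hint1 : IntervalIntegrable (fun t : ℝ => t ^ (l - 1)) MeasureTheory.volume 1 x := by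
      apply ContinuousOn.intervalIntegrable
      apply ContinuousOn.rpow_const continuousOn_id
      intro t ht
      rw [uIcc_of_le hx] at ht
      exact Or.inl (by dsimp; nlinarith [ht.1])
    have hint2 : IntervalIntegrable
        (fun t : ℝ => (x - x ^ (l - 1)) / (x - 1) + (x ^ (l - 1) - 1) / (x - 1) * t)
        MeasureTheory.volume 1 x := by
      apply Continuous.intervalIntegrable; fun_prop
    have hmono := intervalIntegral.integral_mono_on hx hint1 hint2 hpt
    have hI1 : ∫ t in (1:ℝ)..x, t ^ (l - 1) = (x ^ l - 1) / l := by
      rw [integral_rpow (Or.inl (by linarith : (-1:ℝ) < l - 1))]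
      have h : l - 1 + 1 = l := by ring
      rw [h, Real.one_rpow]
    have hI2 : (∫ t in (1:ℝ)..x,
        ((x - x ^ (l - 1)) / (x - 1) + (x ^ (l - 1) - 1) / (x - 1) * t))
        = (1 / 2) * (x ^ l - x ^ (l - 1) + x - 1) := by
      rw [intervalIntegral.integral_add intervalIntegrable_const
        (by apply Continuous.intervalIntegrable; fun_prop),
        intervalIntegral.integral_const, intervalIntegral.integral_const_mul,
        integral_id]
      rw [hsplit]
      rw [smul_eq_mul]
      field_simp
      ring
    rw [hI1, hI2] at hmono
    exact hmono
  · -- last inequality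
    have : x ^ (l - 1) * (x - 1) ≤ 1 * (x - 1) :=
      mul_le_mul_of_nonneg_right hg1 (by linarith)
    nlinarith [this]
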